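/- For every bounded linear operator S on a complex Hilbert space, every α ∈ [0,1], and every r ≥ 1, dw(S)^{2r} ≤ 2^{r−1}·‖α|S|^{2r} + (1−α)|S*|^{2r} + |S*S|^{2r}‖. -/

import Mathlib

set_option maxHeartbeats 1000000


open scoped InnerProductSpace

variable {H : Type*} [NormedAddCommGroup H] [InnerProductSpace ℂ H] [CompleteSpace H]

noncomputable def dwRadius (S : H →L[ℂ] H) : ℝ :=
  ⨆ x : {x : H // ‖x‖ = 1}, Real.sqrt (‖(⟪S x.1, x.1⟫_ℂ : ℂ)‖ ^ 2 + ‖S x.1‖ ^ 4)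

noncomputable def opAbs (S : H →L[ℂ] H) : H →L[ℂ] H :=
  CFC.sqrt (ContinuousLinearMap.adjoint S * S)

namespace DwAux

open ContinuousLinearMap

lemma inner_re_le_of_le {T T' : H →L[ℂ] H} (h : T ≤ T') (x : H) :
    RCLike.re ⟪T x, x⟫_ℂ ≤ RCLike.re ⟪T' x, x⟫_ℂ := by
  have h0 := ((ContinuousLinearMap.le_def T T').mp h).inner_nonneg_left x
  rw [ContinuousLinearMap.sub_apply, inner_sub_left] at h0
  have h1 := (RCLike.le_iff_re_im.mp h0).1
  rw [map_zero, map_sub, sub_nonneg] at h1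
  exact h1

lemma inner_re_nonneg {T : H →L[ℂ] H} (h : 0 ≤ T) (x : H) : 0 ≤ RCLike.re ⟪T x, x⟫_ℂ := by
  simpa using inner_re_le_of_le h x

omit [CompleteSpace H] in
lemma inner_re_le_norm (T : H →L[ℂ] H) {x : H} (hx : ‖x‖ = 1) :
    RCLike.re ⟪T x, x⟫_ℂ ≤ ‖T‖ := by
  calc RCLike.re ⟪T x, x⟫_ℂ ≤ ‖(⟪T x, x⟫_ℂ : ℂ)‖ := RCLike.re_le_norm _
    _ ≤ ‖T x‖ * ‖x‖ := norm_inner_le_norm _ _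
    _ ≤ (‖T‖ * ‖x‖) * ‖x‖ := by
        have := T.le_opNorm x
        nlinarith [norm_nonneg x]
    _ = ‖T‖ := by rw [hx]; ring

lemma tangent_line {s t p : ℝ} (hs : 0 < s) (ht : 0 ≤ t) (hp : 1 ≤ p) :
    s ^ p + p * s ^ (p - 1) * (t - s) ≤ t ^ p := by
  have hz : -1 ≤ t / s - 1 := by
    have : 0 ≤ t / s := div_nonneg ht hs.le
    linarith
  have h := one_add_mul_self_le_rpow_one_add hz hp
  rw [add_sub_cancel] at h
  have hsp : 0 < s ^ p := Real.rpow_pos_of_pos hs p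
  rw [Real.div_rpow ht hs.le] at h
  have h2 := mul_le_mul_of_nonneg_left h hsp.le
  rw [mul_div_cancel₀ _ hsp.ne'] at h2
  have hkey : s ^ p * (1 + p * (t / s - 1)) = s ^ p + p * s ^ (p - 1) * (t - s) := by
    have hs1 : s ^ (p - 1) = s ^ p / s := by
      rw [Real.rpow_sub hs, Real.rpow_one]
    rw [hs1]
    field_simp
  linarith [hkey ▸ h2]

lemma holder_mccarthy (A : H →L[ℂ] H) (hA : 0 ≤ A) {p : ℝ} (hp : 1 ≤ p)
    {x : H} (hx : ‖x‖ = 1) :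
    RCLike.re ⟪A x, x⟫_ℂ ^ p ≤ RCLike.re ⟪CFC.rpow A p x, x⟫_ℂ := by
  have hp0 : (0:ℝ) < p := lt_of_lt_of_le one_pos hp
  have hsa : IsSelfAdjoint A := IsSelfAdjoint.of_nonneg hA
  have hcont : Continuous fun t : ℝ => t ^ p := Real.continuous_rpow_const hp0.le
  have hrpow : CFC.rpow A p = cfc (fun t : ℝ => t ^ p) A := by
    rw [CFC.rpow, cfc_nnreal_eq_real _ _ hA]
    apply cfc_congr
    intro t ht
    have ht0 : 0 ≤ t := spectrum_nonneg_of_nonneg hA ht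
    simp [NNReal.coe_rpow, Real.coe_toNNReal t ht0]
  set s := RCLike.re ⟪A x, x⟫_ℂ with hs
  have hs0 : 0 ≤ s := inner_re_nonneg hA x
  rcases eq_or_lt_of_le hs0 with heq | hpos
  · rw [← heq, Real.zero_rpow hp0.ne']
    exact inner_re_nonneg CFC.rpow_nonneg x
  · set c := p * s ^ (p - 1) with hc
    set b := s ^ p - c * s with hb
    have hmono : cfc (fun t : ℝ => b + c * t) A ≤ cfc (fun t : ℝ => t ^ p) A := by
      apply cfc_mono (f := fun t : ℝ => b + c * t) (g := fun t : ℝ => t ^ p)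
        ?_ (by fun_prop) hcont.continuousOn
      intro t ht
      have ht0 : 0 ≤ t := spectrum_nonneg_of_nonneg hA ht
      have htl := tangent_line hpos ht0 hp
      show b + c * t ≤ t ^ p
      rw [hb, hc]
      nlinarith [htl]
    have hcalc : cfc (fun t : ℝ => b + c * t) A = b • (1 : H →L[ℂ] H) + c • A := by
      rw [cfc_add (a := A) (fun _ : ℝ => b) (fun t : ℝ => c * t) (by fun_prop) (by fun_prop),
        cfc_const b A, cfc_const_mul_id c A, Algebra.algebraMap_eq_smul_one]
    rw [hcalc] at hmono
    have hfin := inner_re_le_of_le hmono x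
    have hval : RCLike.re ⟪(b • (1 : H →L[ℂ] H) + c • A) x, x⟫_ℂ = b + c * s := by
      have h1 : (b • (1 : H →L[ℂ] H) + c • A) x = b • x + c • A x := by
        simp [ContinuousLinearMap.add_apply]
      rw [h1, inner_add_left]
      rw [RCLike.real_smul_eq_coe_smul (K := ℂ) b x, inner_smul_left]
      rw [RCLike.real_smul_eq_coe_smul (K := ℂ) c (A x), inner_smul_left]
      rw [map_add]
      simp only [RCLike.conj_ofReal, RCLike.re_ofReal_mul]
      have h4 : RCLike.re ⟪x, x⟫_ℂ = 1 := by
        rw [inner_self_eq_norm_sq, hx]; norm_num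
      rw [h4, ← hs]
      ring
    rw [hval] at hfin
    rw [hrpow]
    have hbc : b + c * s = s ^ p := by rw [hb]; ring
    linarith [hbc ▸ hfin]

lemma add_rpow_le_two_rpow (a b : ℝ) (ha : 0 ≤ a) (hb : 0 ≤ b) {p : ℝ} (hp : 1 ≤ p) :
    (a + b) ^ p ≤ 2 ^ (p - 1) * (a ^ p + b ^ p) := by
  have h := NNReal.rpow_add_le_mul_rpow_add_rpow a.toNNReal b.toNNReal hp
  rw [← NNReal.coe_le_coe] at h
  push_cast at h
  rwa [Real.coe_toNNReal a ha, Real.coe_toNNReal b hb] at h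

end DwAux

open ContinuousLinearMap DwAux in
theorem dw_rpow_bound' (S : H →L[ℂ] H) (α r : ℝ) (hα : α ∈ Set.Icc (0 : ℝ) 1) (hr : 1 ≤ r) :
    dwRadius S ^ (2 * r) ≤ 2 ^ (r - 1) *
      ‖α • CFC.rpow (opAbs S) (2 * r)
        + (1 - α) • CFC.rpow (opAbs (ContinuousLinearMap.adjoint S)) (2 * r)
        + CFC.rpow (ContinuousLinearMap.adjoint S * S) (2 * r)‖ := by
  obtain ⟨hα0, hα1⟩ := hα
  have hr0 : (0:ℝ) < r := lt_of_lt_of_le one_pos hr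
  have h2r : (0:ℝ) < 2 * r := by linarith
  have hSS : (0 : H →L[ℂ] H) ≤ ContinuousLinearMap.adjoint S * S :=
    star_mul_self_nonneg S
  have hSS' : (0 : H →L[ℂ] H) ≤ S * ContinuousLinearMap.adjoint S :=
    mul_star_self_nonneg S
  have habs1 : CFC.rpow (opAbs S) (2 * r)
      = CFC.rpow (ContinuousLinearMap.adjoint S * S) r := by
    rw [opAbs, CFC.sqrt_eq_rpow, CFC.rpow_eq_pow,
      CFC.rpow_rpow_of_exponent_nonneg _ _ _ (by norm_num) (by linarith) hSS,
      show (1/2 : ℝ) * (2 * r) = r by ring, CFC.rpow_eq_pow]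
  have habs2 : CFC.rpow (opAbs (ContinuousLinearMap.adjoint S)) (2 * r)
      = CFC.rpow (S * ContinuousLinearMap.adjoint S) r := by
    rw [opAbs, ContinuousLinearMap.adjoint_adjoint, CFC.sqrt_eq_rpow, CFC.rpow_eq_pow,
      CFC.rpow_rpow_of_exponent_nonneg _ _ _ (by norm_num) (by linarith) hSS',
      show (1/2 : ℝ) * (2 * r) = r by ring, CFC.rpow_eq_pow]
  set A1 := CFC.rpow (ContinuousLinearMap.adjoint S * S) r with hA1
  set B1 := CFC.rpow (S * ContinuousLinearMap.adjoint S) r with hB1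
  set C1 := CFC.rpow (ContinuousLinearMap.adjoint S * S) (2 * r) with hC1
  rw [habs1, habs2]
  set T := α • A1 + (1 - α) • B1 + C1 with hT
  set M := (2:ℝ) ^ (r - 1) * ‖T‖ with hM
  have hM0 : 0 ≤ M := mul_nonneg (Real.rpow_nonneg (by norm_num) _) (norm_nonneg _)
  have key : ∀ x : H, ‖x‖ = 1 →
      (‖(⟪S x, x⟫_ℂ : ℂ)‖ ^ 2 + ‖S x‖ ^ 4) ^ r ≤ M := by
    intro x hx
    set u : ℝ := ‖S x‖ ^ 2 with hu
    set v : ℝ := ‖ContinuousLinearMap.adjoint S x‖ ^ 2 with hv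
    set w : ℝ := ‖(⟪S x, x⟫_ℂ : ℂ)‖ ^ 2 with hw
    have hu0 : 0 ≤ u := by positivity
    have hv0 : 0 ≤ v := by positivity
    have hw0 : 0 ≤ w := by positivity
    have hwu : w ≤ u := by
      have h1 : ‖(⟪S x, x⟫_ℂ : ℂ)‖ ≤ ‖S x‖ := by
        have := norm_inner_le_norm (𝕜 := ℂ) (S x) x
        rwa [hx, mul_one] at this
      rw [hw, hu]
      exact pow_le_pow_left₀ (norm_nonneg _) h1 2
    have hwv : w ≤ v := by
      have heq : ⟪S x, x⟫_ℂ = ⟪x, ContinuousLinearMap.adjoint S x⟫_ℂ :=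
        (ContinuousLinearMap.adjoint_inner_right S x x).symm
      have h1 : ‖(⟪S x, x⟫_ℂ : ℂ)‖ ≤ ‖ContinuousLinearMap.adjoint S x‖ := by
        rw [heq]
        have := norm_inner_le_norm (𝕜 := ℂ) x (ContinuousLinearMap.adjoint S x)
        rwa [hx, one_mul] at this
      rw [hw, hv]
      exact pow_le_pow_left₀ (norm_nonneg _) h1 2
    have huinner : u = RCLike.re ⟪(ContinuousLinearMap.adjoint S * S) x, x⟫_ℂ := by
      rw [ContinuousLinearMap.mul_apply, ContinuousLinearMap.adjoint_inner_left,
        inner_self_eq_norm_sq]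
    have hvinner : v = RCLike.re ⟪(S * ContinuousLinearMap.adjoint S) x, x⟫_ℂ := by
      have hadj := ContinuousLinearMap.adjoint_inner_left
        (ContinuousLinearMap.adjoint S) x (ContinuousLinearMap.adjoint S x)
      rw [ContinuousLinearMap.adjoint_adjoint] at hadj
      rw [ContinuousLinearMap.mul_apply, hadj, inner_self_eq_norm_sq]
    have h1 : u ^ r ≤ RCLike.re ⟪A1 x, x⟫_ℂ := by
      rw [huinner]; exact holder_mccarthy _ hSS hr hx
    have h2 : v ^ r ≤ RCLike.re ⟪B1 x, x⟫_ℂ := by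
      rw [hvinner]; exact holder_mccarthy _ hSS' hr hx
    have h3 : u ^ (2 * r) ≤ RCLike.re ⟪C1 x, x⟫_ℂ := by
      rw [huinner]; exact holder_mccarthy _ hSS (by linarith) hx
    have hwr : w ^ r ≤ α * u ^ r + (1 - α) * v ^ r := by
      have hru : w ^ r ≤ u ^ r := Real.rpow_le_rpow hw0 hwu hr0.le
      have hrv : w ^ r ≤ v ^ r := Real.rpow_le_rpow hw0 hwv hr0.le
      nlinarith [hru, hrv]
    have h4 : ‖S x‖ ^ 4 = u ^ 2 := by rw [hu]; ring
    have h5 : (u ^ 2 : ℝ) ^ r = u ^ (2 * r) := by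
      rw [← Real.rpow_natCast u 2, ← Real.rpow_mul hu0]
      norm_num
    have h6 : (w + u ^ 2) ^ r ≤ 2 ^ (r - 1) * (w ^ r + (u ^ 2) ^ r) :=
      add_rpow_le_two_rpow w (u ^ 2) hw0 (by positivity) hr
    have h7 : RCLike.re ⟪T x, x⟫_ℂ
        = α * RCLike.re ⟪A1 x, x⟫_ℂ + (1 - α) * RCLike.re ⟪B1 x, x⟫_ℂ
          + RCLike.re ⟪C1 x, x⟫_ℂ := by
      rw [hT]
      simp only [ContinuousLinearMap.add_apply, ContinuousLinearMap.smul_apply]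
      rw [inner_add_left, inner_add_left,
        RCLike.real_smul_eq_coe_smul (K := ℂ) α (A1 x), inner_smul_left,
        RCLike.real_smul_eq_coe_smul (K := ℂ) (1 - α) (B1 x), inner_smul_left,
        map_add, map_add]
      simp only [RCLike.conj_ofReal, RCLike.re_ofReal_mul]
    have h8 : RCLike.re ⟪T x, x⟫_ℂ ≤ ‖T‖ := inner_re_le_norm T hx
    have hApos : 0 ≤ RCLike.re ⟪A1 x, x⟫_ℂ := inner_re_nonneg CFC.rpow_nonneg x
    have hBpos : 0 ≤ RCLike.re ⟪B1 x, x⟫_ℂ := inner_re_nonneg CFC.rpow_nonneg x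
    have h9 : w ^ r + (u ^ 2) ^ r ≤ RCLike.re ⟪T x, x⟫_ℂ := by
      rw [h7, h5]
      nlinarith [h1, h2, h3, hwr, hApos, hBpos]
    calc (w + ‖S x‖ ^ 4) ^ r = (w + u ^ 2) ^ r := by rw [h4]
      _ ≤ 2 ^ (r - 1) * (w ^ r + (u ^ 2) ^ r) := h6
      _ ≤ 2 ^ (r - 1) * RCLike.re ⟪T x, x⟫_ℂ :=
          mul_le_mul_of_nonneg_left h9 (Real.rpow_nonneg (by norm_num) _)
      _ ≤ M := by
          rw [hM]
          exact mul_le_mul_of_nonneg_left h8 (Real.rpow_nonneg (by norm_num) _)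
  have hsup : dwRadius S ≤ M ^ (2 * r)⁻¹ := by
    apply Real.iSup_le _ (Real.rpow_nonneg hM0 _)
    rintro ⟨x, hx⟩
    have hk := key x hx
    have he0 : (0:ℝ) ≤ ‖(⟪S x, x⟫_ℂ : ℂ)‖ ^ 2 + ‖S x‖ ^ 4 := by positivity
    have hsq : Real.sqrt (‖(⟪S x, x⟫_ℂ : ℂ)‖ ^ 2 + ‖S x‖ ^ 4)
        = ((‖(⟪S x, x⟫_ℂ : ℂ)‖ ^ 2 + ‖S x‖ ^ 4) ^ r) ^ (2 * r)⁻¹ := by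
      rw [Real.sqrt_eq_rpow, ← Real.rpow_mul he0]
      congr 1
      field_simp
    rw [hsq]
    exact Real.rpow_le_rpow (Real.rpow_nonneg he0 _) hk (by positivity)
  have hd0 : 0 ≤ dwRadius S := Real.iSup_nonneg fun x => Real.sqrt_nonneg _
  calc dwRadius S ^ (2 * r) ≤ (M ^ (2 * r)⁻¹) ^ (2 * r) :=
        Real.rpow_le_rpow hd0 hsup h2r.le
    _ = M := by
        rw [← Real.rpow_mul hM0, inv_mul_cancel₀ h2r.ne', Real.rpow_one]
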